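/- Fix integers d ≥ 1 and ℓ ≥ 1, let U₁, …, U_M be the points of the ℓ-th principal lattice P_ℓ of the simplex Δ_d with M = binom(ℓ+d, d), and let σ₀ = min_{|u|₂ = 1} |𝒱u|₂ be the minimum singular value of the Vandermonde-type matrix 𝒱. Let η ≥ 0, and let g and ĝ be polynomials in d variables of total degree at most ℓ. If |g(U_i) − ĝ(U_i)| ≤ η for every 1 ≤ i ≤ M, then sup_{x ∈ [0,1]^d} |g(x) − ĝ(x)| ≤ M · η / σ₀. -/

import Mathlib

open MeasureTheory Finset
open scoped ENNReal

noncomputable section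

/-- The largest integer strictly less than `β` (for `β > 0`). -/
def lflr (β : ℝ) : ℕ := ⌈β⌉₊ - 1

/-- The Euclidean (`ℓ²`) norm on `Fin d → ℝ`. -/
noncomputable def l2norm {d : ℕ} (x : Fin d → ℝ) : ℝ := Real.sqrt (∑ i, x i ^ 2)

/-- Partial derivative in coordinate `i`. -/
noncomputable def pder {d : ℕ} (i : Fin d) (f : (Fin d → ℝ) → ℝ) : (Fin d → ℝ) → ℝ :=
  fun x => fderiv ℝ f x (Pi.single i 1)

/-- The multi-index partial differential operator `D^s`. -/
noncomputable def mderiv {d : ℕ} (s : Fin d → ℕ) (f : (Fin d → ℝ) → ℝ) : (Fin d → ℝ) → ℝ :=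
  (List.finRange d).foldr (fun i g => (pder i)^[s i] g) f

/-- The Hölder class `H(β, L)`: functions supported on the unit cube, `⌊β⌋` times
differentiable, whose top-order partial derivatives are `(β - ⌊β⌋)`-Hölder with
constant `L` (w.r.t. the Euclidean norm). -/
def HolderClass (d : ℕ) (β L : ℝ) (f : (Fin d → ℝ) → ℝ) : Prop :=
  (∀ x, x ∉ Set.Icc (0 : Fin d → ℝ) 1 → f x = 0) ∧
  ContDiff ℝ (lflr β : ℕ) f ∧
  ∀ s : Fin d → ℕ, (∑ i, s i) = lflr β → ∀ x y : Fin d → ℝ,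
    |mderiv s f x - mderiv s f y| ≤ L * l2norm (x - y) ^ (β - (lflr β : ℝ))

/-- Barycentric coordinates with respect to the simplex `Δ_d` with vertices
`0, e_1, …, e_d`. -/
def lam {d : ℕ} (t : Fin (d + 1)) (x : Fin d → ℝ) : ℝ :=
  if h : t = 0 then 1 - ∑ i, x i else x (t.pred h)

/-- The `ℓ`-th principal lattice of the simplex `Δ_d`: points of the simplex all of
whose barycentric coordinates are nonnegative integer multiples of `1/ℓ`. -/
def principalLattice (d ℓ : ℕ) : Set (Fin d → ℝ) :=
  {x | ∀ t : Fin (d + 1), 0 ≤ lam t x ∧ ∃ r : ℕ, (ℓ : ℝ) * lam t x = r}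

/-- The Lagrange basis polynomial `p` associated with a point `u` of the `ℓ`-th
principal lattice:  `p(x) = ∏_{t : λ_t(u) > 0} ∏_{r=0}^{ℓλ_t(u)-1}
(λ_t(x) - r/ℓ)/(λ_t(u) - r/ℓ)`. -/
noncomputable def lagBasis (d ℓ : ℕ) (u x : Fin d → ℝ) : ℝ :=
  ∏ t : Fin (d + 1), ∏ r ∈ Finset.range ⌊(ℓ : ℝ) * lam t u⌋₊,
    (lam t x - r / ℓ) / (lam t u - r / ℓ)

end


noncomputable section Aux
lemma l2norm_nonneg {d : ℕ} (x : Fin d → ℝ) : 0 ≤ l2norm x := Real.sqrt_nonneg _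

lemma l2norm_eq_zero {d : ℕ} {x : Fin d → ℝ} (h : l2norm x = 0) : x = 0 := by
  have h2 : ∑ i, x i ^ 2 = 0 := by
    have h1 := Real.sqrt_eq_zero'.mp h
    have h0 : 0 ≤ ∑ i, x i ^ 2 := Finset.sum_nonneg fun i _ => sq_nonneg _
    linarith
  funext i
  have := Finset.sum_eq_zero_iff_of_nonneg (fun i _ => sq_nonneg (x i)) |>.mp h2 i (mem_univ i)
  simpa using pow_eq_zero_iff (n := 2) (by norm_num) |>.mp this

lemma l2norm_smul {d : ℕ} (a : ℝ) (x : Fin d → ℝ) : l2norm (a • x) = |a| * l2norm x := by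
  unfold l2norm
  rw [← Real.sqrt_sq_eq_abs, ← Real.sqrt_mul (sq_nonneg a), Finset.mul_sum]
  exact congrArg Real.sqrt (Finset.sum_congr rfl fun i _ => by simp [mul_pow])


lemma lam_succ {d : ℕ} (i : Fin d) (x : Fin d → ℝ) : lam i.succ x = x i := by
  simp [lam, Fin.succ_ne_zero]
lemma myreconstruct {d ℓ M : ℕ} (α : Fin M → (Fin d → ℕ)) (hαinj : Function.Injective α)
    (hαrange : Set.range α = {s : Fin d → ℕ | ∑ i, s i ≤ ℓ})
    (P : MvPolynomial (Fin d) ℝ) (hP : P.totalDegree ≤ ℓ) (x : Fin d → ℝ) :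
    ∑ j, MvPolynomial.coeff (Finsupp.equivFunOnFinite.symm (α j)) P * ∏ i, x i ^ α j i
      = MvPolynomial.eval x P := by
  set e : Fin M → (Fin d →₀ ℕ) := fun j => Finsupp.equivFunOnFinite.symm (α j) with he
  have heinj : ∀ a ∈ Finset.univ, ∀ b ∈ Finset.univ, e a = e b → a = b := by
    intro a _ b _ hab
    exact hαinj (Finsupp.equivFunOnFinite.symm.injective hab)
  have hsub : P.support ⊆ Finset.image e Finset.univ := by
    intro s hs
    have h1 := MvPolynomial.le_totalDegree hs
    rw [Finsupp.sum_fintype _ _ (fun _ => rfl)] at h1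
    have hmem : (s : Fin d → ℕ) ∈ Set.range α := by
      rw [hαrange]; exact h1.trans hP
    obtain ⟨j, hj⟩ := hmem
    refine Finset.mem_image.mpr ⟨j, Finset.mem_univ j, ?_⟩
    rw [he]; simp only [hj]; exact Finsupp.equivFunOnFinite_symm_coe s
  rw [MvPolynomial.eval_eq' x P,
    Finset.sum_subset hsub (fun s _ hns => by
      simp [MvPolynomial.notMem_support_iff.mp hns]),
    Finset.sum_image heinj]
  refine Finset.sum_congr rfl fun j _ => ?_
  rfl
lemma lam_sum {d : ℕ} (x : Fin d → ℝ) : ∑ t, lam t x = 1 := by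
  rw [Fin.sum_univ_succ]
  simp [lam, Fin.succ_ne_zero]

noncomputable def lamPoly {d : ℕ} (t : Fin (d + 1)) : MvPolynomial (Fin d) ℝ :=
  if h : t = 0 then 1 - ∑ i, MvPolynomial.X i else MvPolynomial.X (t.pred h)

lemma eval_lamPoly {d : ℕ} (t : Fin (d + 1)) (x : Fin d → ℝ) :
    MvPolynomial.eval x (lamPoly t) = lam t x := by
  unfold lamPoly lam
  split <;> simp

lemma totalDegree_lamPoly {d : ℕ} (t : Fin (d + 1)) : (lamPoly t).totalDegree ≤ 1 := by
  unfold lamPoly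
  split
  · refine (MvPolynomial.totalDegree_sub _ _).trans ?_
    simp only [max_le_iff]
    constructor
    · simp [MvPolynomial.totalDegree_one]
    · exact (MvPolynomial.totalDegree_finset_sum _ _).trans
        (Finset.sup_le fun i _ => by simp [MvPolynomial.totalDegree_X])
  · simp [MvPolynomial.totalDegree_X]

noncomputable def lagPoly (d ℓ : ℕ) (u : Fin d → ℝ) : MvPolynomial (Fin d) ℝ :=
  ∏ t : Fin (d + 1), ∏ r ∈ Finset.range ⌊(ℓ : ℝ) * lam t u⌋₊,
    MvPolynomial.C (lam t u - (r : ℝ) / ℓ)⁻¹ * (lamPoly t - MvPolynomial.C ((r : ℝ) / ℓ))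

lemma eval_lagPoly (d ℓ : ℕ) (u x : Fin d → ℝ) :
    MvPolynomial.eval x (lagPoly d ℓ u) = lagBasis d ℓ u x := by
  unfold lagPoly lagBasis
  rw [map_prod]
  refine Finset.prod_congr rfl fun t _ => ?_
  rw [map_prod]
  refine Finset.prod_congr rfl fun r _ => ?_
  rw [map_mul, map_sub, eval_lamPoly]
  simp [div_eq_inv_mul, mul_comm]

lemma lattice_floor {d ℓ : ℕ} {u : Fin d → ℝ} (hu : u ∈ principalLattice d ℓ)
    (t : Fin (d + 1)) : ((⌊(ℓ : ℝ) * lam t u⌋₊ : ℝ)) = (ℓ : ℝ) * lam t u := by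
  obtain ⟨hpos, r, hr⟩ := hu t
  rw [hr, Nat.floor_natCast]

lemma lattice_floor_sum {d ℓ : ℕ} {u : Fin d → ℝ} (hu : u ∈ principalLattice d ℓ) :
    ∑ t, ⌊(ℓ : ℝ) * lam t u⌋₊ = ℓ := by
  have : ((∑ t, ⌊(ℓ : ℝ) * lam t u⌋₊ : ℕ) : ℝ) = (ℓ : ℝ) := by
    push_cast
    rw [Finset.sum_congr rfl fun t _ => lattice_floor hu t, ← Finset.mul_sum, lam_sum, mul_one]
  exact_mod_cast this

lemma totalDegree_lagPoly {d ℓ : ℕ} {u : Fin d → ℝ} (hu : u ∈ principalLattice d ℓ) :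
    (lagPoly d ℓ u).totalDegree ≤ ℓ := by
  have hstep : ∀ t : Fin (d + 1),
      (∏ r ∈ Finset.range ⌊(ℓ : ℝ) * lam t u⌋₊,
        MvPolynomial.C (lam t u - (r : ℝ) / ℓ)⁻¹ *
          (lamPoly t - MvPolynomial.C ((r : ℝ) / ℓ))).totalDegree
      ≤ ⌊(ℓ : ℝ) * lam t u⌋₊ := by
    intro t
    refine (MvPolynomial.totalDegree_finset_prod _ _).trans ?_
    have h1 : ∀ r ∈ Finset.range ⌊(ℓ : ℝ) * lam t u⌋₊,
        (MvPolynomial.C (lam t u - (r : ℝ) / ℓ)⁻¹ *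
          (lamPoly t - MvPolynomial.C ((r : ℝ) / ℓ))).totalDegree ≤ 1 := by
      intro r _
      refine (MvPolynomial.totalDegree_mul _ _).trans ?_
      rw [MvPolynomial.totalDegree_C, zero_add]
      refine (MvPolynomial.totalDegree_sub _ _).trans ?_
      simp only [max_le_iff, MvPolynomial.totalDegree_C]
      exact ⟨totalDegree_lamPoly t, Nat.zero_le 1⟩
    refine le_trans (Finset.sum_le_sum h1) ?_
    simp
  refine (MvPolynomial.totalDegree_finset_prod _ _).trans ?_
  refine le_trans (Finset.sum_le_sum fun t _ => hstep t) ?_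
  exact le_of_eq (lattice_floor_sum hu)
lemma lagBasis_self {d ℓ : ℕ} (hℓ : 1 ≤ ℓ) {u : Fin d → ℝ} (hu : u ∈ principalLattice d ℓ) :
    lagBasis d ℓ u u = 1 := by
  unfold lagBasis
  refine Finset.prod_eq_one fun t _ => Finset.prod_eq_one fun r hr => ?_
  have hℓ0 : (0 : ℝ) < ℓ := by exact_mod_cast hℓ
  have hr' : (r : ℝ) < (ℓ : ℝ) * lam t u := by
    rw [← lattice_floor hu t]
    exact_mod_cast Finset.mem_range.mp hr
  have hne : lam t u - (r : ℝ) / ℓ ≠ 0 := by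
    have : (r : ℝ) / ℓ < lam t u := (div_lt_iff₀ hℓ0).mpr (by linarith [hr'])
    linarith
  exact div_self hne

lemma lagBasis_ne {d ℓ : ℕ} (hℓ : 1 ≤ ℓ) {u v : Fin d → ℝ}
    (hu : u ∈ principalLattice d ℓ) (hv : v ∈ principalLattice d ℓ) (hne : v ≠ u) :
    lagBasis d ℓ u v = 0 := by
  have hℓ0 : (0 : ℝ) < ℓ := by exact_mod_cast hℓ
  have hex : ∃ t, ⌊(ℓ : ℝ) * lam t v⌋₊ < ⌊(ℓ : ℝ) * lam t u⌋₊ := by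
    by_contra hcon
    push_neg at hcon
    have hsum : ∑ t, ⌊(ℓ : ℝ) * lam t u⌋₊ = ∑ t, ⌊(ℓ : ℝ) * lam t v⌋₊ := by
      rw [lattice_floor_sum hu, lattice_floor_sum hv]
    have heq : ∀ t ∈ Finset.univ, ⌊(ℓ : ℝ) * lam t u⌋₊ = ⌊(ℓ : ℝ) * lam t v⌋₊ :=
      (Finset.sum_eq_sum_iff_of_le fun t _ => hcon t).mp hsum
    apply hne
    funext i
    have h1 := heq i.succ (Finset.mem_univ _)
    have h2 : (ℓ : ℝ) * lam i.succ u = (ℓ : ℝ) * lam i.succ v := by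
      rw [← lattice_floor hu, ← lattice_floor hv]
      exact_mod_cast h1
    have h3 : lam i.succ u = lam i.succ v := mul_left_cancel₀ (ne_of_gt hℓ0) h2
    simpa [lam, Fin.succ_ne_zero] using h3.symm
  obtain ⟨t, ht⟩ := hex
  unfold lagBasis
  refine Finset.prod_eq_zero (Finset.mem_univ t) ?_
  refine Finset.prod_eq_zero (Finset.mem_range.mpr ht) ?_
  have : lam t v - (⌊(ℓ : ℝ) * lam t v⌋₊ : ℝ) / ℓ = 0 := by
    rw [lattice_floor hv t]
    field_simp
    ring
  rw [this, zero_div]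
end Aux

/-- If two polynomials of total degree at most `ℓ` differ by at most
`η` at all points of the `ℓ`-th principal lattice, then they differ by at most
`M η / σ₀` uniformly on the unit cube, where `σ₀` is the minimum singular value of
the Vandermonde-type matrix `𝒱`. -/
theorem stmt7 (d ℓ : ℕ) (hd : 1 ≤ d) (hℓ : 1 ≤ ℓ)
    (M : ℕ) (hM : M = Nat.choose (ℓ + d) d)
    (U : Fin M → (Fin d → ℝ)) (hUinj : Function.Injective U)
    (hUrange : Set.range U = principalLattice d ℓ)
    (α : Fin M → (Fin d → ℕ)) (hαinj : Function.Injective α)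
    (hαrange : Set.range α = {s : Fin d → ℕ | ∑ i, s i ≤ ℓ})
    (V : Matrix (Fin M) (Fin M) ℝ)
    (hV : V = Matrix.of fun k j : Fin M => ∏ i, U k i ^ α j i)
    (σ₀ : ℝ)
    (hσ : IsLeast {r : ℝ | ∃ u : Fin M → ℝ, l2norm u = 1 ∧ r = l2norm (V.mulVec u)} σ₀)
    (η : ℝ) (hη : 0 ≤ η)
    (g ghat : MvPolynomial (Fin d) ℝ)
    (hg : g.totalDegree ≤ ℓ) (hghat : ghat.totalDegree ≤ ℓ)
    (hclose : ∀ k : Fin M,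
      |MvPolynomial.eval (U k) g - MvPolynomial.eval (U k) ghat| ≤ η) :
    ∀ x ∈ Set.Icc (0 : Fin d → ℝ) 1,
      |MvPolynomial.eval x g - MvPolynomial.eval x ghat| ≤ M * η / σ₀ := by
  classical
  set e : Fin M → (Fin d →₀ ℕ) := fun j => Finsupp.equivFunOnFinite.symm (α j) with he
  -- evaluation identity for mulVec of coefficient vectors
  have hmul : ∀ P : MvPolynomial (Fin d) ℝ, P.totalDegree ≤ ℓ →
      V.mulVec (fun j => MvPolynomial.coeff (e j) P) = fun k => MvPolynomial.eval (U k) P := by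
    intro P hP
    funext k
    have : V.mulVec (fun j => MvPolynomial.coeff (e j) P) k
        = ∑ j, V k j * MvPolynomial.coeff (e j) P := by
      simp [Matrix.mulVec, dotProduct]
    rw [this, ← myreconstruct α hαinj hαrange P hP (U k)]
    refine Finset.sum_congr rfl fun j _ => ?_
    rw [hV]
    simp [mul_comm, he]
  -- U k is in the lattice
  have hUlat : ∀ k, U k ∈ principalLattice d ℓ := by
    intro k; rw [← hUrange]; exact Set.mem_range_self k
  -- surjectivity of mulVec
  have hbasis : ∀ k : Fin M, ∃ c : Fin M → ℝ, V.mulVec c = (Pi.single k 1 : Fin M → ℝ) := by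
    intro k
    refine ⟨fun j => MvPolynomial.coeff (e j) (lagPoly d ℓ (U k)), ?_⟩
    rw [hmul _ (totalDegree_lagPoly (hUlat k))]
    funext k'
    rw [eval_lagPoly, Pi.single_apply]
    by_cases hkk : k' = k
    · subst hkk; rw [lagBasis_self hℓ (hUlat k')]; simp
    · rw [lagBasis_ne hℓ (hUlat k) (hUlat k') (fun hUeq => hkk (hUinj hUeq))]
      simp [hkk]
  have hsurj : Function.Surjective V.mulVecLin := by
    intro y
    choose cc hcc using hbasis
    refine ⟨∑ k, y k • cc k, ?_⟩
    rw [map_sum]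
    have : ∀ k, V.mulVecLin (y k • cc k) = y k • (Pi.single k 1 : Fin M → ℝ) := by
      intro k
      rw [_root_.map_smul, Matrix.mulVecLin_apply, hcc k]
    rw [Finset.sum_congr rfl fun k _ => this k]
    funext i
    simp [Pi.single_apply, Finset.sum_ite_eq']
  have hinj : Function.Injective V.mulVecLin :=
    (LinearMap.injective_iff_surjective).mpr hsurj
  -- positivity of σ₀
  have σpos : 0 < σ₀ := by
    obtain ⟨⟨u, hu1, hu2⟩, -⟩ := hσ
    rcases lt_or_eq_of_le (l2norm_nonneg (V.mulVec u)) with hlt | heq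
    · rw [hu2]; exact hlt
    · exfalso
      have h0 : V.mulVec u = 0 := l2norm_eq_zero heq.symm
      have hu0 : u = 0 := by
        apply hinj
        rw [Matrix.mulVecLin_apply, h0, map_zero]
      rw [hu0] at hu1
      simp [l2norm] at hu1
  -- the difference polynomial and its coefficients
  set P : MvPolynomial (Fin d) ℝ := g - ghat with hPdef
  have hP : P.totalDegree ≤ ℓ := (MvPolynomial.totalDegree_sub g ghat).trans (max_le hg hghat)
  set c : Fin M → ℝ := fun j => MvPolynomial.coeff (e j) P with hcdef
  have hVc : V.mulVec c = fun k => MvPolynomial.eval (U k) P := hmul P hP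
  -- bound on l2norm (V.mulVec c)
  have hVcb : l2norm (V.mulVec c) ≤ Real.sqrt M * η := by
    rw [hVc]
    unfold l2norm
    have hsum : ∑ k, (MvPolynomial.eval (U k) P) ^ 2 ≤ (M : ℝ) * η ^ 2 := by
      have : ∀ k : Fin M, (MvPolynomial.eval (U k) P) ^ 2 ≤ η ^ 2 := by
        intro k
        have h1 : |MvPolynomial.eval (U k) P| ≤ η := by
          rw [hPdef, map_sub]; exact hclose k
        calc (MvPolynomial.eval (U k) P) ^ 2 = |MvPolynomial.eval (U k) P| ^ 2 := (sq_abs _).symm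
          _ ≤ η ^ 2 := by
            refine pow_le_pow_left₀ (abs_nonneg _) h1 2
      calc ∑ k, (MvPolynomial.eval (U k) P) ^ 2 ≤ ∑ _k : Fin M, η ^ 2 :=
            Finset.sum_le_sum fun k _ => this k
        _ = (M : ℝ) * η ^ 2 := by simp [mul_comm]
    refine le_trans (Real.sqrt_le_sqrt hsum) ?_
    rw [Real.sqrt_mul (Nat.cast_nonneg M), Real.sqrt_sq hη]
  -- lower bound via σ₀
  have hlow : σ₀ * l2norm c ≤ l2norm (V.mulVec c) := by
    by_cases hc : c = 0
    · rw [hc]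
      have : l2norm (0 : Fin M → ℝ) = 0 := by simp [l2norm]
      rw [this, mul_zero]
      exact l2norm_nonneg _
    · have ha : 0 < l2norm c := by
        rcases lt_or_eq_of_le (l2norm_nonneg c) with h | h
        · exact h
        · exact absurd (l2norm_eq_zero h.symm) hc
      set a := l2norm c with hadef
      have hunit : l2norm (a⁻¹ • c) = 1 := by
        rw [l2norm_smul, abs_of_pos (inv_pos.mpr ha), inv_mul_cancel₀ (ne_of_gt ha)]
      have hmem : σ₀ ≤ l2norm (V.mulVec (a⁻¹ • c)) :=
        hσ.2 ⟨a⁻¹ • c, hunit, rfl⟩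
      rw [Matrix.mulVec_smul, l2norm_smul, abs_of_pos (inv_pos.mpr ha)] at hmem
      calc σ₀ * a ≤ (a⁻¹ * l2norm (V.mulVec c)) * a := by
            exact mul_le_mul_of_nonneg_right hmem (le_of_lt ha)
        _ = l2norm (V.mulVec c) := by field_simp
  have hcb : l2norm c ≤ Real.sqrt M * η / σ₀ := by
    rw [le_div_iff₀ σpos, mul_comm]
    exact hlow.trans hVcb
  -- final estimate
  intro x hx
  have hxi : ∀ i, 0 ≤ x i ∧ x i ≤ 1 := fun i => ⟨hx.1 i, hx.2 i⟩
  have heval : MvPolynomial.eval x g - MvPolynomial.eval x ghat = ∑ j, c j * ∏ i, x i ^ α j i := by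
    rw [← map_sub]
    exact (myreconstruct α hαinj hαrange P hP x).symm
  rw [heval]
  have habs : |∑ j, c j * ∏ i, x i ^ α j i| ≤ ∑ j, |c j| := by
    refine le_trans (Finset.abs_sum_le_sum_abs _ _) ?_
    refine Finset.sum_le_sum fun j _ => ?_
    rw [abs_mul]
    have hprod : |∏ i, x i ^ α j i| ≤ 1 := by
      rw [abs_of_nonneg (Finset.prod_nonneg fun i _ => pow_nonneg (hxi i).1 _)]
      exact Finset.prod_le_one (fun i _ => pow_nonneg (hxi i).1 _)
        (fun i _ => pow_le_one₀ (hxi i).1 (hxi i).2)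
    calc |c j| * |∏ i, x i ^ α j i| ≤ |c j| * 1 :=
          mul_le_mul_of_nonneg_left hprod (abs_nonneg _)
      _ = |c j| := mul_one _
  have hcs : ∑ j, |c j| ≤ Real.sqrt M * l2norm c := by
    have h2 : (∑ j, |c j|) ^ 2 ≤ (M : ℝ) * ∑ j, c j ^ 2 := by
      have := sq_sum_le_card_mul_sum_sq (s := Finset.univ) (f := fun j => |c j|)
      simpa [sq_abs] using this
    have hnn : 0 ≤ ∑ j, |c j| := Finset.sum_nonneg fun j _ => abs_nonneg _
    have := (Real.le_sqrt hnn (by positivity)).mpr h2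
    rwa [Real.sqrt_mul (Nat.cast_nonneg M)] at this
  calc |∑ j, c j * ∏ i, x i ^ α j i| ≤ ∑ j, |c j| := habs
    _ ≤ Real.sqrt M * l2norm c := hcs
    _ ≤ Real.sqrt M * (Real.sqrt M * η / σ₀) :=
          mul_le_mul_of_nonneg_left hcb (Real.sqrt_nonneg _)
    _ = (M : ℝ) * η / σ₀ := by
          rw [mul_div_assoc, ← mul_assoc, Real.mul_self_sqrt (Nat.cast_nonneg M), mul_div_assoc]
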